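/- Let D be a diagram in [n]×[n] avoiding the configuration of Theorem 1 (no i_1 < i_2, j_1 < j_2 with (i_1,j_1),(i_1,j_2) ∉ D and (i_2,j_1),(i_2,j_2) ∈ D). If C, C' ≤ D are distinct diagrams, then the maximal-weight flagged fillings F_max(C) and F_max(C') of D (with contents C and C' respectively) differ in some box, and moreover if they have the same multiset of entries in every row then there exist a row r, an entry a < r, and columns k ≠ k' such that a appears in box (r,k) of F_max(C) and in box (r,k') of F_max(C'), with (a,k) ∉ D and (a,k') ∉ D. -/
import Mathlib


open Finset

/-- The Gale order on finite subsets of `Fin n` (for equal cardinalities):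
`C ≤ D` iff they have the same cardinality and the `i`-th smallest element of `C`
is at most the `i`-th smallest element of `D` for every `i`. -/
def Gale {n : ℕ} (C D : Finset (Fin n)) : Prop :=
  ∃ h : C.card = D.card, ∀ i : Fin C.card,
    C.orderEmbOfFin rfl i ≤ D.orderEmbOfFin h.symm i

/-- The generic `n × n` upper-triangular matrix `Y`, with entry `y_{ij}` (an
indeterminate) when `i ≤ j` and `0` below the diagonal. -/
noncomputable def Ygen (n : ℕ) : Matrix (Fin n) (Fin n) (MvPolynomial (Fin n × Fin n) ℂ) :=
  fun i j => if i ≤ j then MvPolynomial.X (i, j) else 0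

/-- `det (Y^R_S)`: the determinant of the submatrix of `Y` with rows indexed by `R`
(in increasing order) and columns indexed by `S` (in increasing order); by convention,
`0` if the cardinalities differ. -/
noncomputable def colDet {n : ℕ} (R S : Finset (Fin n)) : MvPolynomial (Fin n × Fin n) ℂ :=
  if h : R.card = S.card then
    Matrix.det (Matrix.of fun a b : Fin R.card =>
      Ygen n (R.orderEmbOfFin rfl a) (S.orderEmbOfFin h.symm b))
  else 0

/-- A flagged filling of a diagram `D = (D_1,…,D_n)` with content `C = (C_1,…,C_n)`:
for each column `j`, a bijection `F j : D_j → C_j` with `F j d ≤ d`. -/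
def FlaggedD {n : ℕ} {D C : Fin n → Finset (Fin n)}
    (F : ∀ j, {x // x ∈ D j} ≃ {x // x ∈ C j}) : Prop :=
  ∀ j, ∀ d : {x // x ∈ D j}, ((F j) d : Fin n) ≤ (d : Fin n)

/-- The weight of a flagged filling: `wt F i` is the sum of the entries (as elements of
`{1,…,n}`, i.e. `val + 1`) placed in row `i`. -/
def wt {n : ℕ} {D C : Fin n → Finset (Fin n)}
    (F : ∀ j, {x // x ∈ D j} ≃ {x // x ∈ C j}) (i : Fin n) : ℕ :=
  ∑ j : Fin n, if h : i ∈ D j then (((F j) ⟨i, h⟩ : Fin n) : ℕ) + 1 else 0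

/-- Strict lexicographic comparison of weight vectors (row `1` most significant). -/
def LexGT {n : ℕ} (f g : Fin n → ℕ) : Prop :=
  ∃ i : Fin n, g i < f i ∧ ∀ t : Fin n, t < i → f t = g t

/-- The monomial `y^F = ∏_j ∏_{d ∈ D_j} y_{F_j(d), d}` of a flagged filling. -/
noncomputable def ymon {n : ℕ} {D C : Fin n → Finset (Fin n)}
    (F : ∀ j, {x // x ∈ D j} ≃ {x // x ∈ C j}) : MvPolynomial (Fin n × Fin n) ℂ :=
  ∏ j : Fin n, ∏ d ∈ (D j).attach, MvPolynomial.X (((F j) d : Fin n), (d : Fin n))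

/-- `D` avoids the forbidden configuration: there are no rows `i₁ < i₂` and columns
`j₁ < j₂` with `(i₁,j₁), (i₁,j₂) ∉ D` and `(i₂,j₁), (i₂,j₂) ∈ D`. -/
def Avoids {n : ℕ} (D : Fin n → Finset (Fin n)) : Prop :=
  ¬ ∃ i₁ i₂ j₁ j₂ : Fin n, i₁ < i₂ ∧ j₁ < j₂ ∧
      i₁ ∉ D j₁ ∧ i₁ ∉ D j₂ ∧ i₂ ∈ D j₁ ∧ i₂ ∈ D j₂

/-- The multiset of entries in row `i` of a flagged filling `F`. -/
def rowEntries {n : ℕ} {D C : Fin n → Finset (Fin n)}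
    (F : ∀ j, {x // x ∈ D j} ≃ {x // x ∈ C j}) (i : Fin n) : Multiset (Fin n) :=
  (Finset.univ : Finset (Fin n)).val.bind fun j =>
    if h : i ∈ D j then {(((F j) ⟨i, h⟩ : Fin n))} else 0

/-- for `D` avoiding the configuration and distinct contents `C ≠ C'`,
the maximal-weight fillings differ in some box; and if they have the same multiset of
entries in every row, there are a row `r`, an entry `a < r` and columns `k ≠ k'` with
`a` in box `(r,k)` of `Fmax` and in box `(r,k')` of `F'max`, and `(a,k),(a,k') ∉ D`. -/
lemma lexgt_asymm {n : ℕ} {f g : Fin n → ℕ} (h1 : LexGT f g) (h2 : LexGT g f) : False := by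
  obtain ⟨i, hi, hpi⟩ := h1
  obtain ⟨i', hi', hpi'⟩ := h2
  rcases lt_trichotomy i i' with h | h | h
  · exact absurd (hpi' i h) (by omega)
  · subst h; omega
  · exact absurd (hpi i' h) (by omega)

lemma key_pos {n : ℕ} {D C : Fin n → Finset (Fin n)}
    (F : ∀ j, {x // x ∈ D j} ≃ {x // x ∈ C j}) (hf : FlaggedD F)
    (hm : ∀ G : ∀ j, {x // x ∈ D j} ≃ {x // x ∈ C j},
      FlaggedD G → G ≠ F → LexGT (wt F) (wt G))
    {k a r : Fin n} (ha : a ∈ D k) (hr : r ∈ D k)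
    (hval : ((F k) ⟨r, hr⟩ : Fin n) = a) : r ≤ a := by
  classical
  by_contra hlt
  push_neg at hlt   -- hlt : a < r
  set d1 : {x // x ∈ D k} := ⟨a, ha⟩ with hd1
  set d2 : {x // x ∈ D k} := ⟨r, hr⟩ with hd2
  have hd12 : d1 ≠ d2 := fun h => absurd (congrArg Subtype.val h) (ne_of_lt hlt)
  set G : ∀ j, {x // x ∈ D j} ≃ {x // x ∈ C j} :=
    Function.update F k ((Equiv.swap d1 d2).trans (F k)) with hGdef
  have hGk : G k = (Equiv.swap d1 d2).trans (F k) := Function.update_self k _ F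
  have hGj : ∀ j, j ≠ k → G j = F j := fun j hj => Function.update_of_ne hj _ F
  have hb_le : ((F k) d1 : Fin n) ≤ a := hf k d1
  have hb_ne : ((F k) d1 : Fin n) ≠ a := by
    intro h
    apply hd12
    apply (F k).injective
    apply Subtype.ext
    rw [h, hval]
  have hGflag : FlaggedD G := by
    intro j d
    by_cases hj : j = k
    · subst hj
      rw [hGk]
      simp only [Equiv.trans_apply]
      by_cases h1 : d = d1
      · subst h1
        rw [Equiv.swap_apply_left, hval]
      · by_cases h2 : d = d2
        · subst h2
          rw [Equiv.swap_apply_right]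
          exact le_trans hb_le (le_of_lt hlt)
        · rw [Equiv.swap_apply_of_ne_of_ne h1 h2]
          exact hf j d
    · rw [hGj j hj]; exact hf j d
  have hGne : G ≠ F := by
    intro h
    have h2 : G k d1 = F k d1 := by rw [h]
    rw [hGk] at h2
    simp only [Equiv.trans_apply, Equiv.swap_apply_left] at h2
    exact hd12 ((F k).injective h2).symm
  have hLex : LexGT (wt G) (wt F) := by
    refine ⟨a, ?_, ?_⟩
    · unfold wt
      apply Finset.sum_lt_sum
      · intro j _
        by_cases hj : j = k
        · subst hj
          rw [dif_pos ha, dif_pos ha, hGk]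
          simp only [Equiv.trans_apply]
          rw [← hd1, Equiv.swap_apply_left, hval]
          omega
        · rw [hGj j hj]
      · refine ⟨k, Finset.mem_univ k, ?_⟩
        rw [dif_pos ha, dif_pos ha, hGk]
        simp only [Equiv.trans_apply]
        rw [← hd1, Equiv.swap_apply_left, hval]
        have := lt_of_le_of_ne hb_le hb_ne
        have : (((F k) d1 : Fin n) : ℕ) < (a : ℕ) := this
        omega
    · intro t ht
      unfold wt
      apply Finset.sum_congr rfl
      intro j _
      by_cases hj : j = k
      · subst hj
        by_cases htD : t ∈ D j
        · rw [dif_pos htD, dif_pos htD, hGk]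
          simp only [Equiv.trans_apply]
          have h1 : (⟨t, htD⟩ : {x // x ∈ D j}) ≠ d1 :=
            fun h => absurd (congrArg Subtype.val h) (ne_of_lt ht)
          have h2 : (⟨t, htD⟩ : {x // x ∈ D j}) ≠ d2 :=
            fun h => absurd (congrArg Subtype.val h) (ne_of_lt (lt_trans ht hlt))
          rw [Equiv.swap_apply_of_ne_of_ne h1 h2]
        · rw [dif_neg htD, dif_neg htD]
      · rw [hGj j hj]
  exact lexgt_asymm hLex (hm G hGflag hGne)

lemma count_row {n : ℕ} {D C : Fin n → Finset (Fin n)}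
    (F : ∀ j, {x // x ∈ D j} ≃ {x // x ∈ C j}) (r a : Fin n)
    [DecidablePred fun k => ∃ h : r ∈ D k, ((F k) ⟨r, h⟩ : Fin n) = a] :
    (rowEntries F r).count a
      = (Finset.univ.filter fun k => ∃ h : r ∈ D k, ((F k) ⟨r, h⟩ : Fin n) = a).card := by
  classical
  unfold rowEntries
  rw [Multiset.count_bind, Finset.card_filter]
  rw [show ((Finset.univ : Finset (Fin n)).val.map fun j =>
      Multiset.count a (if h : r ∈ D j then {((F j) ⟨r, h⟩ : Fin n)} else 0)).sum
    = ∑ j : Fin n, Multiset.count a (if h : r ∈ D j then {((F j) ⟨r, h⟩ : Fin n)} else 0)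
    from rfl]
  apply Finset.sum_congr rfl
  intro j _
  by_cases h : r ∈ D j
  · rw [dif_pos h, Multiset.count_singleton]
    by_cases hv : ((F j) ⟨r, h⟩ : Fin n) = a
    · rw [if_pos hv.symm, if_pos ⟨h, hv⟩]
    · rw [if_neg (fun hh => hv hh.symm), if_neg (by rintro ⟨h', hv'⟩; exact hv hv')]
  · rw [dif_neg h]
    simp only [Multiset.count_zero]
    rw [if_neg (by rintro ⟨h', _⟩; exact h h')]

theorem max_fillings_differ {n : ℕ} (D C C' : Fin n → Finset (Fin n))
    (hav : Avoids D) (hG : ∀ j, Gale (C j) (D j)) (hG' : ∀ j, Gale (C' j) (D j))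
    (hne : C ≠ C')
    (Fmax : ∀ j, {x // x ∈ D j} ≃ {x // x ∈ C j})
    (F'max : ∀ j, {x // x ∈ D j} ≃ {x // x ∈ C' j})
    (hflag : FlaggedD Fmax) (hflag' : FlaggedD F'max)
    (hmax : ∀ F : ∀ j, {x // x ∈ D j} ≃ {x // x ∈ C j},
      FlaggedD F → F ≠ Fmax → LexGT (wt Fmax) (wt F))
    (hmax' : ∀ F : ∀ j, {x // x ∈ D j} ≃ {x // x ∈ C' j},
      FlaggedD F → F ≠ F'max → LexGT (wt F'max) (wt F)) :
    (∃ (j : Fin n) (d : Fin n) (hd : d ∈ D j),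
        ((Fmax j) ⟨d, hd⟩ : Fin n) ≠ ((F'max j) ⟨d, hd⟩ : Fin n)) ∧
    ((∀ i : Fin n, rowEntries Fmax i = rowEntries F'max i) →
      ∃ (r a k k' : Fin n), a < r ∧ k ≠ k' ∧
        (∃ hk : r ∈ D k, ((Fmax k) ⟨r, hk⟩ : Fin n) = a) ∧
        (∃ hk' : r ∈ D k', ((F'max k') ⟨r, hk'⟩ : Fin n) = a) ∧
        a ∉ D k ∧ a ∉ D k') := by
  classical
  have part1 : ∃ (j : Fin n) (d : Fin n) (hd : d ∈ D j),
      ((Fmax j) ⟨d, hd⟩ : Fin n) ≠ ((F'max j) ⟨d, hd⟩ : Fin n) := by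
    by_contra h
    push_neg at h
    apply hne
    funext j
    ext z
    constructor
    · intro hz
      set d := (Fmax j).symm ⟨z, hz⟩ with hd
      have h1 : ((Fmax j) ⟨d.1, d.2⟩ : Fin n) = ((F'max j) ⟨d.1, d.2⟩ : Fin n) := h j d.1 d.2
      have h2 : ((Fmax j) d : Fin n) = z := by rw [hd, Equiv.apply_symm_apply]
      have h3 : ((F'max j) d : Fin n) = z := by rw [← h2]; exact h1.symm
      rw [← h3]; exact ((F'max j) d).2
    · intro hz
      set d := (F'max j).symm ⟨z, hz⟩ with hd
      have h1 : ((Fmax j) ⟨d.1, d.2⟩ : Fin n) = ((F'max j) ⟨d.1, d.2⟩ : Fin n) := h j d.1 d.2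
      have h2 : ((F'max j) d : Fin n) = z := by rw [hd, Equiv.apply_symm_apply]
      have h3 : ((Fmax j) d : Fin n) = z := by rw [← h2]; exact h1
      rw [← h3]; exact ((Fmax j) d).2
  refine ⟨part1, fun hrow => ?_⟩
  obtain ⟨k0, r0, hd0, hne0⟩ := part1
  have hcard : ∀ a : Fin n,
      (Finset.univ.filter fun k => ∃ h : r0 ∈ D k, ((Fmax k) ⟨r0, h⟩ : Fin n) = a).card
        = (Finset.univ.filter fun k => ∃ h : r0 ∈ D k, ((F'max k) ⟨r0, h⟩ : Fin n) = a).card := by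
    intro a
    rw [← count_row Fmax r0 a, ← count_row F'max r0 a, hrow r0]
  have exch : ∀ a k : Fin n,
      (∃ h : r0 ∈ D k, ((Fmax k) ⟨r0, h⟩ : Fin n) = a) →
      ¬ (∃ h : r0 ∈ D k, ((F'max k) ⟨r0, h⟩ : Fin n) = a) →
      ∃ k', (∃ h : r0 ∈ D k', ((F'max k') ⟨r0, h⟩ : Fin n) = a) ∧
        ¬ (∃ h : r0 ∈ D k', ((Fmax k') ⟨r0, h⟩ : Fin n) = a) := by
    intro a k hPk hP'k
    by_contra hno
    push_neg at hno
    have hsub : (Finset.univ.filter fun k => ∃ h : r0 ∈ D k, ((F'max k) ⟨r0, h⟩ : Fin n) = a)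
        ⊆ (Finset.univ.filter fun k => ∃ h : r0 ∈ D k, ((Fmax k) ⟨r0, h⟩ : Fin n) = a) := by
      intro w hw
      rw [Finset.mem_filter] at hw ⊢
      exact ⟨hw.1, hno w hw.2⟩
    have heq := Finset.eq_of_subset_of_card_le hsub (le_of_eq (hcard a))
    have hk : k ∈ (Finset.univ.filter fun k => ∃ h : r0 ∈ D k, ((Fmax k) ⟨r0, h⟩ : Fin n) = a) :=
      Finset.mem_filter.mpr ⟨Finset.mem_univ k, hPk⟩
    rw [← heq] at hk
    exact hP'k (Finset.mem_filter.mp hk).2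
  have exch' : ∀ a k : Fin n,
      (∃ h : r0 ∈ D k, ((F'max k) ⟨r0, h⟩ : Fin n) = a) →
      ¬ (∃ h : r0 ∈ D k, ((Fmax k) ⟨r0, h⟩ : Fin n) = a) →
      ∃ k', (∃ h : r0 ∈ D k', ((Fmax k') ⟨r0, h⟩ : Fin n) = a) ∧
        ¬ (∃ h : r0 ∈ D k', ((F'max k') ⟨r0, h⟩ : Fin n) = a) := by
    intro a k hPk hP'k
    by_contra hno
    push_neg at hno
    have hsub : (Finset.univ.filter fun k => ∃ h : r0 ∈ D k, ((Fmax k) ⟨r0, h⟩ : Fin n) = a)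
        ⊆ (Finset.univ.filter fun k => ∃ h : r0 ∈ D k, ((F'max k) ⟨r0, h⟩ : Fin n) = a) := by
      intro w hw
      rw [Finset.mem_filter] at hw ⊢
      exact ⟨hw.1, hno w hw.2⟩
    have heq := Finset.eq_of_subset_of_card_le hsub (le_of_eq (hcard a).symm)
    have hk : k ∈ (Finset.univ.filter fun k => ∃ h : r0 ∈ D k, ((F'max k) ⟨r0, h⟩ : Fin n) = a) :=
      Finset.mem_filter.mpr ⟨Finset.mem_univ k, hPk⟩
    rw [← heq] at hk
    exact hP'k (Finset.mem_filter.mp hk).2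
  set x := ((Fmax k0) ⟨r0, hd0⟩ : Fin n) with hx
  set y := ((F'max k0) ⟨r0, hd0⟩ : Fin n) with hy
  have hxle : x ≤ r0 := hflag k0 ⟨r0, hd0⟩
  have hyle : y ≤ r0 := hflag' k0 ⟨r0, hd0⟩
  by_cases hxr : x = r0
  · have hyr : y < r0 := lt_of_le_of_ne hyle (fun h => hne0 (hxr.trans h.symm))
    have hP'y : ∃ h : r0 ∈ D k0, ((F'max k0) ⟨r0, h⟩ : Fin n) = y := ⟨hd0, rfl⟩
    have hPy : ¬ ∃ h : r0 ∈ D k0, ((Fmax k0) ⟨r0, h⟩ : Fin n) = y := by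
      rintro ⟨h, hv⟩
      exact hne0 hv
    obtain ⟨k1, hPk1, hP'k1⟩ := exch' y k0 hP'y hPy
    refine ⟨r0, y, k1, k0, hyr, fun h => ?_, hPk1, hP'y, ?_, ?_⟩
    · subst h; exact hPy hPk1
    · intro hD
      obtain ⟨h, hv⟩ := hPk1
      exact absurd (key_pos Fmax hflag hmax hD h hv) (not_le.mpr hyr)
    · intro hD
      obtain ⟨h, hv⟩ := hP'y
      exact absurd (key_pos F'max hflag' hmax' hD h hv) (not_le.mpr hyr)
  · have hxr' : x < r0 := lt_of_le_of_ne hxle hxr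
    have hPx : ∃ h : r0 ∈ D k0, ((Fmax k0) ⟨r0, h⟩ : Fin n) = x := ⟨hd0, rfl⟩
    have hP'x : ¬ ∃ h : r0 ∈ D k0, ((F'max k0) ⟨r0, h⟩ : Fin n) = x := by
      rintro ⟨h, hv⟩
      exact hne0 hv.symm
    obtain ⟨k1, hP'k1, hPk1⟩ := exch x k0 hPx hP'x
    refine ⟨r0, x, k0, k1, hxr', fun h => ?_, hPx, hP'k1, ?_, ?_⟩
    · subst h; exact hPk1 hPx
    · intro hD
      obtain ⟨h, hv⟩ := hPx
      exact absurd (key_pos Fmax hflag hmax hD h hv) (not_le.mpr hxr')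
    · intro hD
      obtain ⟨h, hv⟩ := hP'k1
      exact absurd (key_pos F'max hflag' hmax' hD h hv) (not_le.mpr hxr')
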